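/- For all integers N ≥ 1 and δ ≥ 2, the rational number w_{N,δ} := (δ - 1)·((N·δ + 1)·(δ - 1)^(N-1) + (-1)^N·(δ + 1)) / (12·δ^2) satisfies the inequality w_{N,δ} ≤ ((δ - 1)^N / 48)·(2·N + 1 + 3·(-1)^N), and equality holds if and only if N = 1, or δ = 2, or (N = 3 and δ = 3). -/
import Mathlib


/-- The rational number `w_{N,δ}` from the paper. -/
def w (N δ : ℕ) : ℚ :=
  ((δ : ℚ) - 1) * (((N : ℚ) * δ + 1) * ((δ : ℚ) - 1) ^ (N - 1) + (-1) ^ N * ((δ : ℚ) + 1)) /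
    (12 * (δ : ℚ) ^ 2)

/-- Auxiliary quantity: `48 δ² (RHS - w) / (δ - 1)` for `N = n + 1`. -/
def Ef (n δ : ℕ) : ℚ :=
  ((δ : ℚ) - 1) ^ n *
      ((δ : ℚ) ^ 2 * (2 * ((n : ℚ) + 1) + 1 + 3 * (-1) ^ (n + 1)) - 4 * ((n : ℚ) + 1) * (δ : ℚ) - 4)
    - 4 * (-1) ^ (n + 1) * ((δ : ℚ) + 1)

lemma keyE (n δ : ℕ) (hδ : 2 ≤ δ) :
    0 ≤ Ef n δ ∧ (Ef n δ = 0 ↔ n = 0 ∨ δ = 2 ∨ (n = 2 ∧ δ = 3)) := by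
  by_cases hδ2 : δ = 2
  · subst hδ2
    have h0 : Ef n 2 = 0 := by
      unfold Ef
      norm_num
      ring
    refine ⟨le_of_eq h0.symm, by simp [h0]⟩
  · have hq3 : (3 : ℚ) ≤ (δ : ℚ) := by exact_mod_cast (by omega : 3 ≤ δ)
    match n with
    | 0 =>
      have h0 : Ef 0 δ = 0 := by unfold Ef; norm_num; ring
      exact ⟨le_of_eq h0.symm, by simp [h0]⟩
    | 1 =>
      have hpos : 0 < Ef 1 δ := by
        unfold Ef
        norm_num
        nlinarith [hq3, sq_nonneg ((δ:ℚ) - 1)]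
      refine ⟨le_of_lt hpos, ?_⟩
      constructor
      · intro h; exact absurd h hpos.ne'
      · intro h; exact absurd h (by omega)
    | 2 =>
      by_cases hδ3 : δ = 3
      · subst hδ3
        have h0 : Ef 2 3 = 0 := by unfold Ef; norm_num
        exact ⟨le_of_eq h0.symm, by simp [h0]⟩
      · have hq4 : (4 : ℚ) ≤ (δ : ℚ) := by exact_mod_cast (by omega : 4 ≤ δ)
        have hpos : 0 < Ef 2 δ := by
          unfold Ef
          norm_num
          have hc : (0:ℚ) < (δ:ℚ)^2 * 4 - 12 * (δ:ℚ) - 4 := by nlinarith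
          nlinarith [mul_pos (pow_pos (by linarith : (0:ℚ) < (δ:ℚ)-1) 2) hc]
        refine ⟨le_of_lt hpos, ?_⟩
        constructor
        · intro h; exact absurd h hpos.ne'
        · intro h; exact absurd h (by omega)
    | (k + 3) =>
      set n := k + 3 with hn
      have hn3 : (3 : ℚ) ≤ (n : ℚ) := by exact_mod_cast (by omega : 3 ≤ n)
      have hq1 : (1 : ℚ) ≤ (δ : ℚ) - 1 := by linarith
      have hpos : 0 < Ef n δ := by
        rcases Nat.even_or_odd n with he | ho
        · -- n even, n ≥ 4, e = (-1)^(n+1) = -1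
          have hn4 : (4 : ℚ) ≤ (n : ℚ) := by
            obtain ⟨j, hj⟩ := he
            exact_mod_cast (by omega : 4 ≤ n)
          have hepow : ((-1 : ℚ)) ^ (n + 1) = -1 := (he.add_one).neg_one_pow
          unfold Ef
          rw [hepow]
          have hppos : 0 < ((δ:ℚ) - 1) ^ n := by positivity
          have hc : 0 < (δ : ℚ) ^ 2 * (2 * ((n : ℚ) + 1) + 1 + 3 * (-1)) - 4 * ((n : ℚ) + 1) * (δ : ℚ) - 4 := by
            nlinarith [mul_nonneg (mul_nonneg (by linarith : (0:ℚ) ≤ (n:ℚ)) (by linarith : (0:ℚ) ≤ (δ:ℚ))) (by linarith : (0:ℚ) ≤ (δ:ℚ) - 3)]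
          nlinarith [mul_pos hppos hc]
        · -- n odd, e = 1
          have hepow : ((-1 : ℚ)) ^ (n + 1) = 1 := (ho.add_one).neg_one_pow
          unfold Ef
          rw [hepow]
          have hp : ((δ:ℚ) - 1) ≤ ((δ:ℚ) - 1) ^ n := by
            calc ((δ:ℚ) - 1) = ((δ:ℚ) - 1) ^ 1 := (pow_one _).symm
            _ ≤ ((δ:ℚ) - 1) ^ n := pow_le_pow_right₀ hq1 (by omega)
          have hc : 0 ≤ (δ : ℚ) ^ 2 * (2 * ((n : ℚ) + 1) + 1 + 3 * 1) - 4 * ((n : ℚ) + 1) * (δ : ℚ) - 4 := by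
            nlinarith [mul_nonneg (mul_nonneg (by linarith : (0:ℚ) ≤ (n:ℚ)) (by linarith : (0:ℚ) ≤ (δ:ℚ))) (by linarith : (0:ℚ) ≤ (δ:ℚ) - 3)]
          have := mul_le_mul_of_nonneg_right hp hc
          nlinarith [this, mul_nonneg (mul_nonneg (by linarith : (0:ℚ) ≤ (n:ℚ)) (by linarith : (0:ℚ) ≤ (δ:ℚ))) (by linarith : (0:ℚ) ≤ (δ:ℚ) - 3)]
      refine ⟨le_of_lt hpos, ?_⟩
      constructor
      · intro h; exact absurd h hpos.ne'
      · intro h; exact absurd h (by omega)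

/-- For `N ≥ 1` and `δ ≥ 2`, `w_{N,δ} ≤ ((δ-1)^N / 48) (2N + 1 + 3 (-1)^N)`, with equality
if and only if `N = 1`, or `δ = 2`, or `N = 3` and `δ = 3`. -/
theorem w_le (N δ : ℕ) (hN : 1 ≤ N) (hδ : 2 ≤ δ) :
    w N δ ≤ (((δ : ℚ) - 1) ^ N / 48) * (2 * (N : ℚ) + 1 + 3 * (-1) ^ N) ∧
      (w N δ = (((δ : ℚ) - 1) ^ N / 48) * (2 * (N : ℚ) + 1 + 3 * (-1) ^ N) ↔
        N = 1 ∨ δ = 2 ∨ (N = 3 ∧ δ = 3)) := by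
  obtain ⟨m, rfl⟩ : ∃ m, N = m + 1 := ⟨N - 1, (Nat.succ_pred_eq_of_pos hN).symm⟩
  have hq : (2 : ℚ) ≤ (δ : ℚ) := by exact_mod_cast hδ
  have hq0 : (δ : ℚ) ≠ 0 := by linarith
  obtain ⟨hE, hEiff⟩ := keyE m δ hδ
  have hkey : (((δ : ℚ) - 1) ^ (m + 1) / 48) * (2 * ((m + 1 : ℕ) : ℚ) + 1 + 3 * (-1) ^ (m + 1))
      - w (m + 1) δ = ((δ : ℚ) - 1) * Ef m δ / (48 * (δ : ℚ) ^ 2) := by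
    unfold w Ef
    have : (m + 1) - 1 = m := by omega
    rw [this]
    push_cast
    field_simp
    ring
  constructor
  · have h1 : 0 ≤ ((δ : ℚ) - 1) * Ef m δ / (48 * (δ : ℚ) ^ 2) := by
      apply div_nonneg (mul_nonneg (by linarith) hE)
      positivity
    linarith [hkey]
  · constructor
    · intro h
      have hz : ((δ : ℚ) - 1) * Ef m δ / (48 * (δ : ℚ) ^ 2) = 0 := by
        rw [← hkey, h]; ring
      have hE0 : Ef m δ = 0 := by
        have h48 : (48 * (δ : ℚ) ^ 2) ≠ 0 := by positivity
        have := (div_eq_zero_iff.mp hz).resolve_right h48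
        exact (mul_eq_zero.mp this).resolve_left (by intro hc; nlinarith)
      have := hEiff.mp hE0
      omega
    · intro h
      have hE0 : Ef m δ = 0 := hEiff.mpr (by omega)
      have : ((δ : ℚ) - 1) * Ef m δ / (48 * (δ : ℚ) ^ 2) = 0 := by rw [hE0]; ring
      linarith [hkey]
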